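/- If (R, ρ) : (J, D) → (K, E) is a morphism in Diag→(X) such that the functor R : J → K is initial, then (R, ρ) is a weak equivalence. -/

import Mathlib

open CategoryTheory

universe v u

variable {X : Type u} [Category.{v} X]

/-- A functor is a discrete opfibration if every morphism out of the image of an object
has a unique lift with prescribed domain. -/
def IsDiscreteOpfibration {Eb : Type u} [Category.{v} Eb] (π : Eb ⥤ X) : Prop :=
  ∀ (e : Eb) (y : X) (f : π.obj e ⟶ y),
    ∃! p : Σ e' : Eb, e ⟶ e', ∃ h : π.obj p.1 = y, π.map p.2 ≫ eqToHom h = f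

/-- A morphism `(R, ρ) : (J, D) ⟶ (K, E)` in `Diag→(X)` (`R : J ⥤ K`, `ρ : D ⟶ R ⋙ E`)
is a weak equivalence: for every discrete opfibration `π : Eb ⥤ X`, the induced functor
`Diag→(π)` is a discrete opfibration at `(R, ρ)`, i.e. every lift `Db` of `D` along `π`
extends uniquely to a lift `(R, ρb) : (J, Db) ⟶ (K, Ebar)` of the whole morphism. -/
def CovWeakEquivalence {J K : Type v} [SmallCategory J] [SmallCategory K]
    (D : J ⥤ X) (E : K ⥤ X) (R : J ⥤ K) (ρ : D ⟶ R ⋙ E) : Prop :=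
  ∀ (Eb : Type u) (_ : Category.{v} Eb) (π : Eb ⥤ X), IsDiscreteOpfibration π →
    ∀ (Db : J ⥤ Eb) (hDb : Db ⋙ π = D),
      ∃! p : Σ Ebar : { F : K ⥤ Eb // F ⋙ π = E }, (Db ⟶ R ⋙ Ebar.1),
        ∀ j : J, π.map (p.2.app j) =
          eqToHom (Functor.congr_obj hDb j) ≫ ρ.app j ≫
            eqToHom (Functor.congr_obj p.1.2 (R.obj j)).symm

set_option linter.unusedSectionVars false

namespace DOF

variable {Eb : Type u} [Category.{v} Eb] {π : Eb ⥤ X} (hπ : IsDiscreteOpfibration π)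
include hπ

noncomputable def lift (e : Eb) {y : X} (f : π.obj e ⟶ y) : Σ e', e ⟶ e' :=
  (hπ e y f).choose

noncomputable def lObj (e : Eb) {y : X} (f : π.obj e ⟶ y) : Eb := (lift hπ e f).1

noncomputable def lHom (e : Eb) {y : X} (f : π.obj e ⟶ y) : e ⟶ lObj hπ e f :=
  (lift hπ e f).2

lemma lObj_π (e : Eb) {y : X} (f : π.obj e ⟶ y) : π.obj (lObj hπ e f) = y :=
  (hπ e y f).choose_spec.1.choose

lemma lHom_π (e : Eb) {y : X} (f : π.obj e ⟶ y) :
    π.map (lHom hπ e f) ≫ eqToHom (lObj_π hπ e f) = f := by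
  obtain ⟨h, hh⟩ := (hπ e y f).choose_spec.1
  exact hh

lemma lift_uniq {e : Eb} {y : X} {f : π.obj e ⟶ y} {e' : Eb} (g : e ⟶ e')
    (h : π.obj e' = y) (hg : π.map g ≫ eqToHom h = f) :
    (⟨e', g⟩ : Σ e'', e ⟶ e'') = lift hπ e f :=
  (hπ e y f).choose_spec.2 ⟨e', g⟩ ⟨h, hg⟩

lemma lObj_uniq {e : Eb} {y : X} {f : π.obj e ⟶ y} {e' : Eb} (g : e ⟶ e')
    (h : π.obj e' = y) (hg : π.map g ≫ eqToHom h = f) : e' = lObj hπ e f :=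
  congrArg Sigma.fst (lift_uniq hπ g h hg)

lemma uniq {e : Eb} {y : X} {f : π.obj e ⟶ y} {e₁ e₂ : Eb} (g₁ : e ⟶ e₁) (g₂ : e ⟶ e₂)
    (h₁ : π.obj e₁ = y) (h₂ : π.obj e₂ = y)
    (s₁ : π.map g₁ ≫ eqToHom h₁ = f) (s₂ : π.map g₂ ≫ eqToHom h₂ = f) :
    ∃ h : e₁ = e₂, g₁ ≫ eqToHom h = g₂ := by
  have e1 := lift_uniq hπ g₁ h₁ s₁
  have e2 := lift_uniq hπ g₂ h₂ s₂
  rw [← e2] at e1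
  obtain ⟨h, hh⟩ := Sigma.mk.inj_iff.mp e1
  subst h
  exact ⟨rfl, by simpa using eq_of_heq hh⟩

lemma uniq_hom {e e' : Eb} {y : X} {f : π.obj e ⟶ y} (g₁ g₂ : e ⟶ e') (h : π.obj e' = y)
    (s₁ : π.map g₁ ≫ eqToHom h = f) (s₂ : π.map g₂ ≫ eqToHom h = f) : g₁ = g₂ := by
  obtain ⟨h', hh⟩ := uniq hπ g₁ g₂ h h s₁ s₂
  simpa using hh

end DOF

set_option linter.unusedSectionVars false

namespace CovWEAux

variable {Eb : Type u} [Category.{v} Eb] {π : Eb ⥤ X} (hπ : IsDiscreteOpfibration π)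
variable {J K : Type v} [SmallCategory J] [SmallCategory K]
variable {D : J ⥤ X} {E : K ⥤ X} (R : J ⥤ K) (ρ : D ⟶ R ⋙ E) [R.Initial]
variable (Db : J ⥤ Eb) (hDb : Db ⋙ π = D)

/-- The morphism in `X` to be lifted, associated to an object of `R/k`. -/
def phi {k : K} (c : CostructuredArrow R k) : π.obj (Db.obj c.left) ⟶ E.obj k :=
  eqToHom (Functor.congr_obj hDb c.left) ≫ ρ.app c.left ≫ E.map c.hom

lemma phi_comp {k : K} {c c' : CostructuredArrow R k} (u : c ⟶ c') :
    π.map (Db.map u.left) ≫ phi R ρ Db hDb c' = phi R ρ Db hDb c := by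
  have hu : R.map u.left ≫ c'.hom = c.hom := CostructuredArrow.w u
  have hmap := Functor.congr_hom hDb u.left
  simp only [Functor.comp_map] at hmap
  dsimp [phi]
  rw [hmap]
  simp only [Category.assoc, eqToHom_trans_assoc, eqToHom_refl, Category.id_comp]
  rw [NatTrans.naturality_assoc]
  simp only [Functor.comp_map, ← Functor.map_comp, hu]

noncomputable def PhiObj {k : K} (c : CostructuredArrow R k) : Eb :=
  DOF.lObj hπ (Db.obj c.left) (phi R ρ Db hDb c)

lemma PhiObj_π {k : K} (c : CostructuredArrow R k) :
    π.obj (PhiObj hπ R ρ Db hDb c) = E.obj k :=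
  DOF.lObj_π hπ _ _

lemma phiObj_const {k : K} (c c' : CostructuredArrow R k) :
    PhiObj hπ R ρ Db hDb c = PhiObj hπ R ρ Db hDb c' := by
  haveI : IsConnected (CostructuredArrow R k) := Functor.Initial.out k
  refine constant_of_preserves_morphisms (fun c => PhiObj hπ R ρ Db hDb c) ?_ c c'
  intro c₁ c₂ u
  refine (DOF.lObj_uniq hπ
    (Db.map u.left ≫ DOF.lHom hπ (Db.obj c₂.left) (phi R ρ Db hDb c₂))
    (DOF.lObj_π hπ _ _) ?_).symm
  rw [Functor.map_comp, Category.assoc, DOF.lHom_π, phi_comp]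

noncomputable def c0 (k : K) : CostructuredArrow R k :=
  haveI : IsConnected (CostructuredArrow R k) := Functor.Initial.out k
  Classical.arbitrary _

noncomputable def EObj (k : K) : Eb := PhiObj hπ R ρ Db hDb (c0 R k)

lemma EObj_π (k : K) : π.obj (EObj hπ R ρ Db hDb k) = E.obj k :=
  PhiObj_π hπ R ρ Db hDb _

lemma EObj_eq {k : K} (c : CostructuredArrow R k) :
    PhiObj hπ R ρ Db hDb c = EObj hπ R ρ Db hDb k :=
  phiObj_const hπ R ρ Db hDb c _

lemma EMap_obj {k k' : K} (g : k ⟶ k') :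
    DOF.lObj hπ (EObj hπ R ρ Db hDb k) (eqToHom (EObj_π hπ R ρ Db hDb k) ≫ E.map g)
      = EObj hπ R ρ Db hDb k' := by
  set c := c0 R k with hc
  have key : (DOF.lObj hπ (EObj hπ R ρ Db hDb k)
        (eqToHom (EObj_π hπ R ρ Db hDb k) ≫ E.map g))
      = DOF.lObj hπ (Db.obj c.left) (phi R ρ Db hDb (CostructuredArrow.mk (c.hom ≫ g))) := by
    refine DOF.lObj_uniq hπ
      (DOF.lHom hπ (Db.obj c.left) (phi R ρ Db hDb c) ≫
        DOF.lHom hπ (EObj hπ R ρ Db hDb k) (eqToHom (EObj_π hπ R ρ Db hDb k) ≫ E.map g))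
      (DOF.lObj_π hπ _ _) ?_
    erw [Functor.map_comp, Category.assoc,
      DOF.lHom_π hπ (EObj hπ R ρ Db hDb k) (eqToHom (EObj_π hπ R ρ Db hDb k) ≫ E.map g)]
    rw [show (eqToHom (EObj_π hπ R ρ Db hDb k) : π.obj (EObj hπ R ρ Db hDb k) ⟶ E.obj k)
        = eqToHom (DOF.lObj_π hπ (Db.obj c.left) (phi R ρ Db hDb c)) from rfl]
    erw [← Category.assoc, DOF.lHom_π]
    dsimp [phi]
    simp [Category.assoc]
  rw [key]
  exact EObj_eq hπ R ρ Db hDb (CostructuredArrow.mk (c.hom ≫ g))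

noncomputable def EMap {k k' : K} (g : k ⟶ k') :
    EObj hπ R ρ Db hDb k ⟶ EObj hπ R ρ Db hDb k' :=
  DOF.lHom hπ (EObj hπ R ρ Db hDb k) (eqToHom (EObj_π hπ R ρ Db hDb k) ≫ E.map g)
    ≫ eqToHom (EMap_obj hπ R ρ Db hDb g)

lemma EMap_π {k k' : K} (g : k ⟶ k') :
    π.map (EMap hπ R ρ Db hDb g) ≫ eqToHom (EObj_π hπ R ρ Db hDb k')
      = eqToHom (EObj_π hπ R ρ Db hDb k) ≫ E.map g := by
  dsimp [EMap]
  rw [Functor.map_comp, eqToHom_map, Category.assoc, eqToHom_trans, DOF.lHom_π]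

noncomputable def Ebar : K ⥤ Eb where
  obj := EObj hπ R ρ Db hDb
  map := EMap hπ R ρ Db hDb
  map_id k := by
    refine DOF.uniq_hom hπ _ _ (EObj_π hπ R ρ Db hDb k) (EMap_π hπ R ρ Db hDb (𝟙 k)) ?_
    simp
  map_comp {k k' k''} g g' := by
    refine DOF.uniq_hom hπ _ _ (EObj_π hπ R ρ Db hDb k'')
      (EMap_π hπ R ρ Db hDb (g ≫ g')) ?_
    show π.map (EMap hπ R ρ Db hDb g ≫ EMap hπ R ρ Db hDb g') ≫ _ = _
    rw [Functor.map_comp, Category.assoc, EMap_π, ← Category.assoc, EMap_π]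
    simp

lemma Ebar_π : Ebar hπ R ρ Db hDb ⋙ π = E := by
  refine CategoryTheory.Functor.ext (fun k => EObj_π hπ R ρ Db hDb k) ?_
  intro k k' g
  show π.map (EMap hπ R ρ Db hDb g) = _
  erw [← Category.assoc, ← EMap_π hπ R ρ Db hDb g]
  simp
  erw [Category.assoc, eqToHom_trans]
  exact (Category.comp_id _).symm

noncomputable def rbApp (j : J) : Db.obj j ⟶ EObj hπ R ρ Db hDb (R.obj j) :=
  DOF.lHom hπ (Db.obj j) (phi R ρ Db hDb (CostructuredArrow.mk (𝟙 (R.obj j))))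
    ≫ eqToHom (EObj_eq hπ R ρ Db hDb (CostructuredArrow.mk (𝟙 (R.obj j))))

lemma rbApp_π (j : J) :
    π.map (rbApp hπ R ρ Db hDb j) ≫ eqToHom (EObj_π hπ R ρ Db hDb (R.obj j))
      = eqToHom (Functor.congr_obj hDb j) ≫ ρ.app j := by
  dsimp [rbApp]
  erw [Functor.map_comp, eqToHom_map, Category.assoc, eqToHom_trans, DOF.lHom_π]
  dsimp [phi]
  simp

noncomputable def rb : Db ⟶ R ⋙ Ebar hπ R ρ Db hDb where
  app := rbApp hπ R ρ Db hDb
  naturality {j j'} u := by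
    refine DOF.uniq_hom hπ _ _ (EObj_π hπ R ρ Db hDb (R.obj j'))
      (f := eqToHom (Functor.congr_obj hDb j) ≫ ρ.app j ≫ E.map (R.map u)) ?_ ?_
    · erw [Functor.map_comp, Category.assoc, rbApp_π]
      have hmap := Functor.congr_hom hDb u
      simp only [Functor.comp_map] at hmap
      rw [hmap]
      simp only [Category.assoc, eqToHom_trans_assoc, eqToHom_refl, Category.id_comp]
      rw [NatTrans.naturality]
      simp [Functor.comp_map]
    · show π.map (rbApp hπ R ρ Db hDb j ≫ EMap hπ R ρ Db hDb (R.map u)) ≫ _ = _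
      erw [Functor.map_comp, Category.assoc, EMap_π, ← Category.assoc, rbApp_π]
      simp

end CovWEAux

/-- If `(R, ρ) : (J, D) ⟶ (K, E)` is a morphism in `Diag→(X)` and the functor `R` is
initial, then `(R, ρ)` is a weak equivalence. -/
theorem covWeakEquivalence_of_initial {J K : Type v} [SmallCategory J] [SmallCategory K]
    (D : J ⥤ X) (E : K ⥤ X) (R : J ⥤ K) (ρ : D ⟶ R ⋙ E) (hR : R.Initial) :
    CovWeakEquivalence D E R ρ := by
  intro Eb catEb π hπ Db hDb
  haveI := hR
  refine ⟨⟨⟨CovWEAux.Ebar hπ R ρ Db hDb, CovWEAux.Ebar_π hπ R ρ Db hDb⟩,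
    CovWEAux.rb hπ R ρ Db hDb⟩, ?_, ?_⟩
  · intro j
    have h2 : π.map (CovWEAux.rbApp hπ R ρ Db hDb j)
        = (eqToHom (Functor.congr_obj hDb j) ≫ ρ.app j)
            ≫ eqToHom (CovWEAux.EObj_π hπ R ρ Db hDb (R.obj j)).symm := by
      rw [← CovWEAux.rbApp_π hπ R ρ Db hDb j]
      simp
    show π.map (CovWEAux.rbApp hπ R ρ Db hDb j) = _
    rw [h2]
    simp
    rfl
  · rintro ⟨⟨F, hF⟩, σ⟩ hq
    have hobj : ∀ k, F.obj k = CovWEAux.EObj hπ R ρ Db hDb k := by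
      intro k
      have hs : π.map (σ.app (CovWEAux.c0 R k).left ≫ F.map (CovWEAux.c0 R k).hom)
          ≫ eqToHom (Functor.congr_obj hF k)
          = CovWEAux.phi R ρ Db hDb (CovWEAux.c0 R k) := by
        rw [Functor.map_comp, Category.assoc]
        have hmap := Functor.congr_hom hF (CovWEAux.c0 R k).hom
        simp only [Functor.comp_map] at hmap
        rw [hmap]
        simp only [Category.assoc, eqToHom_trans, eqToHom_refl, Category.comp_id]
        rw [hq ((CovWEAux.c0 R k).left)]
        dsimp [CovWEAux.phi]
        simp
      exact DOF.lObj_uniq hπ _ (Functor.congr_obj hF k) hs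
    have hFE : F = CovWEAux.Ebar hπ R ρ Db hDb := by
      refine CategoryTheory.Functor.ext hobj ?_
      intro k k' g
      have key : F.map g ≫ eqToHom (hobj k')
          = eqToHom (hobj k) ≫ CovWEAux.EMap hπ R ρ Db hDb g := by
        refine DOF.uniq_hom hπ _ _ (CovWEAux.EObj_π hπ R ρ Db hDb k')
          (f := eqToHom (Functor.congr_obj hF k) ≫ E.map g) ?_ ?_
        · rw [Functor.map_comp, eqToHom_map, Category.assoc, eqToHom_trans]
          have hmap := Functor.congr_hom hF g
          simp only [Functor.comp_map] at hmap
          rw [show π.map (F.map g) = _ from hmap]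
          simp
        · rw [Functor.map_comp, eqToHom_map, Category.assoc, CovWEAux.EMap_π,
            ← Category.assoc, eqToHom_trans]
      show F.map g = eqToHom (hobj k) ≫ CovWEAux.EMap hπ R ρ Db hDb g ≫ eqToHom (hobj k').symm
      rw [← Category.assoc, ← key]
      simp
    subst hFE
    have hσ : σ = CovWEAux.rb hπ R ρ Db hDb := by
      refine NatTrans.ext (funext fun j => ?_)
      refine DOF.uniq_hom hπ _ _ (CovWEAux.EObj_π hπ R ρ Db hDb (R.obj j))
        (f := eqToHom (Functor.congr_obj hDb j) ≫ ρ.app j) ?_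
        (CovWEAux.rbApp_π hπ R ρ Db hDb j)
      rw [hq j]
      simp
      erw [eqToHom_trans, eqToHom_refl, Category.comp_id]
    subst hσ
    rfl
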